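/- Let F be a linear functional on n×n real matrices, and let R₀, R₁ be two distinct maximizers of F over SO(n). Write R₁ = R₀e^W with W skew-symmetric whose nonzero eigenvalues ±iλⱼ satisfy λⱼ ∈ (−π, π]. Then R₀e^{tW} maximizes F over SO(n) for every t ∈ ℝ. -/

import Mathlib

open Matrix
noncomputable section

def SO (n : ℕ) : Set (Matrix (Fin n) (Fin n) ℝ) :=
  {R | Rᵀ * R = 1 ∧ R.det = 1}

/-- `μ` is a (complex) eigenvalue of the real matrix `W`. -/
def IsEigenvalue {n : ℕ} (W : Matrix (Fin n) (Fin n) ℝ) (μ : ℂ) : Prop :=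
  ∃ v : Fin n → ℂ, v ≠ 0 ∧ (W.map (Complex.ofReal)).mulVec v = μ • v

namespace GeodesicAux

variable {n : ℕ}

lemma smul_skew (s : ℝ) (W : Matrix (Fin n) (Fin n) ℝ) (hW : Wᵀ = -W) :
    (s • W)ᵀ = -(s • W) := by
  rw [Matrix.transpose_smul, hW, smul_neg]

lemma exp_skew_orth (W : Matrix (Fin n) (Fin n) ℝ) (hW : Wᵀ = -W) :
    (NormedSpace.exp W)ᵀ * NormedSpace.exp W = 1 := by
  rw [← Matrix.exp_transpose, hW,
    ← Matrix.exp_add_of_commute (-W) W (Commute.neg_left (Commute.refl W)),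
    neg_add_cancel, NormedSpace.exp_zero]

/-- Spectral decomposition data for a skew real matrix. -/
lemma skew_spectral (V : Matrix (Fin n) (Fin n) ℝ) (hV : Vᵀ = -V) :
    ∃ (U : Matrix (Fin n) (Fin n) ℂ) (d : Fin n → ℝ),
      U * star U = 1 ∧ star U * U = 1 ∧
      V.map Complex.ofReal
        = U * Matrix.diagonal (fun k => -Complex.I * d k) * star U ∧
      (∀ k, ∃ v : Fin n → ℂ, v ≠ 0 ∧
        (V.map Complex.ofReal).mulVec v = (-Complex.I * d k) • v) := by
  set Vc := V.map Complex.ofReal with hVc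
  have hVcT : Vcᴴ = -Vc := by
    ext i j
    simp only [Matrix.conjTranspose_apply, hVc, Matrix.map_apply, Matrix.neg_apply,
      Complex.star_def, Complex.conj_ofReal]
    rw [show V j i = Vᵀ i j from rfl, hV]
    simp
  have hHerm : (Complex.I • Vc).IsHermitian := by
    unfold Matrix.IsHermitian
    rw [Matrix.conjTranspose_smul, hVcT, Complex.star_def, Complex.conj_I, neg_smul, smul_neg,
      neg_neg]
  set U : Matrix (Fin n) (Fin n) ℂ := (hHerm.eigenvectorUnitary : Matrix (Fin n) (Fin n) ℂ) with hU
  set d : Fin n → ℝ := hHerm.eigenvalues with hd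
  have hU1 : U * star U = 1 := Matrix.mem_unitaryGroup_iff.mp hHerm.eigenvectorUnitary.2
  have hU2 : star U * U = 1 := Matrix.mem_unitaryGroup_iff'.mp hHerm.eigenvectorUnitary.2
  refine ⟨U, d, hU1, hU2, ?_, ?_⟩
  · have hspec := hHerm.spectral_theorem
    rw [Unitary.conjStarAlgAut_apply] at hspec
    have h1 : Vc = (-Complex.I) • (Complex.I • Vc) := by
      rw [smul_smul]
      norm_num [Complex.I_mul_I]
    have h2 : (-Complex.I) • (U * Matrix.diagonal (RCLike.ofReal ∘ d) * star U)
        = U * ((-Complex.I) • Matrix.diagonal (RCLike.ofReal ∘ d)) * star U := by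
      rw [Matrix.mul_smul, Matrix.smul_mul]
    have h3 : (-Complex.I) • Matrix.diagonal (RCLike.ofReal ∘ d)
        = Matrix.diagonal (fun k => -Complex.I * d k) := by
      rw [← Matrix.diagonal_smul]
      congr 1
    rw [h1]
    conv_lhs => rw [hspec]
    rw [h2, h3]
  · intro k
    refine ⟨⇑(hHerm.eigenvectorBasis k), by simpa using hHerm.eigenvectorBasis.orthonormal.ne_zero k, ?_⟩
    have h1 := hHerm.mulVec_eigenvectorBasis k
    have h2 : (Complex.I • Vc) *ᵥ ⇑(hHerm.eigenvectorBasis k)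
        = Complex.I • (Vc *ᵥ ⇑(hHerm.eigenvectorBasis k)) := Matrix.smul_mulVec _ _ _
    rw [h2] at h1
    have h3 := congrArg (fun x => (-Complex.I) • x) h1
    simp only [smul_smul] at h3
    rw [show -Complex.I * Complex.I = 1 by simp [Complex.I_mul_I], one_smul] at h3
    rw [h3]
    rw [RCLike.real_smul_eq_coe_smul (K := ℂ), smul_smul]
    rfl

lemma map_exp_ofReal (M : Matrix (Fin n) (Fin n) ℝ) :
    (NormedSpace.exp M).map Complex.ofReal
      = NormedSpace.exp (M.map Complex.ofReal) := by
  letI : SeminormedRing (Matrix (Fin n) (Fin n) ℝ) := Matrix.linftyOpSemiNormedRing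
  letI : NormedRing (Matrix (Fin n) (Fin n) ℝ) := Matrix.linftyOpNormedRing
  letI : NormedAlgebra ℝ (Matrix (Fin n) (Fin n) ℝ) := Matrix.linftyOpNormedAlgebra
  letI : SeminormedRing (Matrix (Fin n) (Fin n) ℂ) := Matrix.linftyOpSemiNormedRing
  letI : NormedRing (Matrix (Fin n) (Fin n) ℂ) := Matrix.linftyOpNormedRing
  letI : NormedAlgebra ℝ (Matrix (Fin n) (Fin n) ℂ) := Matrix.linftyOpNormedAlgebra
  letI : NormedAlgebra ℚ (Matrix (Fin n) (Fin n) ℝ) := Matrix.linftyOpNormedAlgebra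
  letI : NormedAlgebra ℚ (Matrix (Fin n) (Fin n) ℂ) := Matrix.linftyOpNormedAlgebra
  have hcont : Continuous (fun M : Matrix (Fin n) (Fin n) ℝ => M.map Complex.ofReal) :=
    Continuous.matrix_map continuous_id Complex.continuous_ofReal
  exact NormedSpace.map_exp (Complex.ofRealHom.mapMatrix
    (m := Fin n)) hcont M

lemma exp_smul_decomp (V : Matrix (Fin n) (Fin n) ℝ)
    (U : Matrix (Fin n) (Fin n) ℂ) (d : Fin n → ℝ) (hU1 : U * star U = 1)
    (hdiag : V.map Complex.ofReal
      = U * Matrix.diagonal (fun k => -Complex.I * d k) * star U) (s : ℝ) :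
    (NormedSpace.exp (s • V)).map Complex.ofReal
      = U * Matrix.diagonal (fun k => Complex.exp (-Complex.I * d k * s)) * star U := by
  have hsmap : (s • V).map Complex.ofReal
      = U * Matrix.diagonal (fun k => (s : ℂ) * (-Complex.I * d k)) * star U := by
    have h1 : (s • V).map Complex.ofReal = (s : ℂ) • (V.map Complex.ofReal) := by
      ext i j
      simp [Matrix.map_apply, Complex.ofReal_mul]
    rw [h1, hdiag, ← Matrix.smul_mul, ← Matrix.mul_smul, ← Matrix.diagonal_smul]
    congr 1
  have hUnit : IsUnit U := ⟨⟨U, star U, hU1, (mul_eq_one_comm).mp hU1⟩, rfl⟩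
  have hUinv : U⁻¹ = star U := Matrix.inv_eq_right_inv hU1
  have hfun : (NormedSpace.exp fun k => (s : ℂ) * (-Complex.I * d k))
      = fun k => Complex.exp (-Complex.I * d k * s) := by
    funext k
    rw [Pi.exp_def]
    simp only []
    rw [← Complex.exp_eq_exp_ℂ]
    ring_nf
  rw [map_exp_ofReal, hsmap, ← hUinv, Matrix.exp_conj U _ hUnit, Matrix.exp_diagonal, hfun,
    hUinv]

lemma sum_d_eq_zero (V : Matrix (Fin n) (Fin n) ℝ) (hV : Vᵀ = -V)
    (U : Matrix (Fin n) (Fin n) ℂ) (d : Fin n → ℝ) (hU2 : star U * U = 1)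
    (hdiag : V.map Complex.ofReal
      = U * Matrix.diagonal (fun k => -Complex.I * d k) * star U) :
    ∑ k, d k = 0 := by
  have htrV : Matrix.trace V = 0 := by
    have h1 : Matrix.trace Vᵀ = Matrix.trace V := Matrix.trace_transpose V
    rw [hV, Matrix.trace_neg] at h1
    linarith
  have htrVc : Matrix.trace (V.map Complex.ofReal) = 0 := by
    have : Matrix.trace (V.map Complex.ofReal) = ((Matrix.trace V : ℝ) : ℂ) := by
      simp [Matrix.trace, Matrix.map_apply, Matrix.diag]
    rw [this, htrV]
    simp
  have h2 : Matrix.trace (V.map Complex.ofReal)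
      = ∑ k, (-Complex.I * d k) := by
    rw [hdiag, Matrix.trace_mul_comm, ← mul_assoc, hU2, one_mul, Matrix.trace_diagonal]
  rw [htrVc] at h2
  have h3 : (-Complex.I) * (∑ k, (d k : ℂ)) = 0 := by
    rw [Finset.mul_sum]
    exact h2.symm
  have h4 : (∑ k, (d k : ℂ)) = 0 := by
    rcases mul_eq_zero.mp h3 with h | h
    · exfalso; simp [Complex.I_ne_zero] at h
    · exact h
  have h5 : ((∑ k, d k : ℝ) : ℂ) = 0 := by
    push_cast
    exact h4
  exact_mod_cast h5

lemma exp_skew_det (V : Matrix (Fin n) (Fin n) ℝ) (hV : Vᵀ = -V) :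
    (NormedSpace.exp V).det = 1 := by
  obtain ⟨U, d, hU1, hU2, hdiag, -⟩ := skew_spectral V hV
  have hd0 := sum_d_eq_zero V hV U d hU2 hdiag
  have hexp := exp_smul_decomp V U d hU1 hdiag 1
  rw [one_smul] at hexp
  have hdet : ((NormedSpace.exp V).det : ℂ)
      = (NormedSpace.exp (1 • V) |>.det : ℂ) := by rw [one_smul]
  have h1 : ((NormedSpace.exp V).det : ℂ)
      = ((NormedSpace.exp V).map Complex.ofReal).det := by
    exact
      (RingHom.map_det Complex.ofRealHom (NormedSpace.exp V))
  simp only [Complex.ofReal_one, mul_one] at hexp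
  rw [hexp] at h1
  have h2 : (U * Matrix.diagonal (fun k => Complex.exp (-Complex.I * d k)) * star U).det
      = (Matrix.diagonal (fun k => Complex.exp (-Complex.I * d k))).det := by
    rw [Matrix.det_mul, Matrix.det_mul, mul_comm, ← mul_assoc, ← Matrix.det_mul, hU2,
      Matrix.det_one, one_mul]
  have h3 : (Matrix.diagonal (fun k => Complex.exp (-Complex.I * d k))).det = 1 := by
    rw [Matrix.det_diagonal, ← Complex.exp_sum]
    have : ∑ k, -Complex.I * (d k : ℂ) = -Complex.I * ((∑ k, d k : ℝ) : ℂ) := by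
      push_cast
      rw [Finset.mul_sum]
    rw [this, hd0]
    simp
  have : ((NormedSpace.exp V).det : ℂ) = 1 := by rw [h1, h2, h3]
  exact_mod_cast this

lemma exp_skew_mem_SO (V : Matrix (Fin n) (Fin n) ℝ) (hV : Vᵀ = -V) :
    NormedSpace.exp V ∈ SO n :=
  ⟨exp_skew_orth V hV, exp_skew_det V hV⟩

lemma mul_mem_SO {R X : Matrix (Fin n) (Fin n) ℝ} (hR : R ∈ SO n) (hX : X ∈ SO n) :
    R * X ∈ SO n := by
  obtain ⟨hR1, hR2⟩ := hR
  obtain ⟨hX1, hX2⟩ := hX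
  constructor
  · rw [Matrix.transpose_mul, mul_assoc, ← mul_assoc Rᵀ, hR1, one_mul, hX1]
  · rw [Matrix.det_mul, hR2, hX2, mul_one]


lemma map_mul_ofReal (M N : Matrix (Fin n) (Fin n) ℝ) :
    (M * N).map Complex.ofReal = M.map Complex.ofReal * N.map Complex.ofReal := by
  ext i j
  simp [Matrix.map_apply, Matrix.mul_apply]

lemma trace_mul_stdBasis (M : Matrix (Fin n) (Fin n) ℝ) (i j : Fin n) :
    Matrix.trace (M * Matrix.single i j 1) = M j i := by
  simp [Matrix.trace, Matrix.diag, Matrix.mul_apply, Matrix.single, Matrix.of_apply,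
    ite_and, Finset.sum_ite_eq, Finset.sum_ite_eq', eq_comm]

lemma skew_stdpair (i j : Fin n) :
    (Matrix.single i j (1:ℝ) - Matrix.single j i 1)ᵀ
      = -(Matrix.single i j (1:ℝ) - Matrix.single j i 1) := by
  ext a b
  simp only [Matrix.transpose_apply, Matrix.sub_apply, Matrix.neg_apply,
    Matrix.single, Matrix.of_apply]
  have hc1 : (i = b ∧ j = a) = (j = a ∧ i = b) := by rw [and_comm]
  have hc2 : (j = b ∧ i = a) = (i = a ∧ j = b) := by rw [and_comm]
  simp only [hc1, hc2]
  ring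

lemma symm_of_trace_skew (M : Matrix (Fin n) (Fin n) ℝ)
    (h : ∀ S : Matrix (Fin n) (Fin n) ℝ, Sᵀ = -S → Matrix.trace (M * S) = 0) :
    Mᵀ = M := by
  ext i j
  have h0 := h _ (skew_stdpair i j)
  rw [Matrix.mul_sub, Matrix.trace_sub, trace_mul_stdBasis, trace_mul_stdBasis] at h0
  rw [Matrix.transpose_apply]
  linarith

lemma firstOrder (F : Matrix (Fin n) (Fin n) ℝ →ₗ[ℝ] ℝ) (R : Matrix (Fin n) (Fin n) ℝ)
    (hR : R ∈ SO n) (hmaxR : ∀ R' ∈ SO n, F R' ≤ F R)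
    (S : Matrix (Fin n) (Fin n) ℝ) (hS : Sᵀ = -S) : F (R * S) = 0 := by
  letI : SeminormedRing (Matrix (Fin n) (Fin n) ℝ) := Matrix.linftyOpSemiNormedRing
  letI : NormedRing (Matrix (Fin n) (Fin n) ℝ) := Matrix.linftyOpNormedRing
  letI : NormedAlgebra ℝ (Matrix (Fin n) (Fin n) ℝ) := Matrix.linftyOpNormedAlgebra
  set L : Matrix (Fin n) (Fin n) ℝ →L[ℝ] ℝ :=
    LinearMap.toContinuousLinearMap (F.comp (LinearMap.mulLeft ℝ R)) with hL
  have hLval : ∀ X, L X = F (R * X) := fun X => rfl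
  have hd0 : HasDerivAt (fun u : ℝ => NormedSpace.exp (u • S))
      (S * NormedSpace.exp ((0:ℝ) • S)) 0 := hasDerivAt_exp_smul_const' S 0
  have hcomp : HasDerivAt (fun u : ℝ => L (NormedSpace.exp (u • S)))
      (L (S * NormedSpace.exp ((0:ℝ) • S))) 0 :=
    (L.hasFDerivAt).comp_hasDerivAt 0 hd0
  have hloc : IsLocalMax (fun u : ℝ => L (NormedSpace.exp (u • S))) 0 := by
    apply Filter.Eventually.of_forall
    intro u
    simp only [hLval, zero_smul, NormedSpace.exp_zero, mul_one]
    exact hmaxR _ (mul_mem_SO hR (exp_skew_mem_SO _ (smul_skew u S hS)))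
  have hzero := hloc.hasDerivAt_eq_zero hcomp
  rw [hLval, zero_smul, NormedSpace.exp_zero, mul_one] at hzero
  exact hzero

end GeodesicAux

open GeodesicAux in
/-- If `R₀ ≠ R₁` both maximize `F` over `SO(n)`, and `R₁ = R₀ e^W` with `W` skew-symmetric
whose nonzero eigenvalues `±iλ` satisfy `λ ∈ (-π, π]`, then the whole geodesic
`t ↦ R₀ e^{tW}` consists of maximizers of `F` over `SO(n)`. -/
theorem geodesic_between_maximizers (n : ℕ)
    (F : Matrix (Fin n) (Fin n) ℝ →ₗ[ℝ] ℝ)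
    (R₀ R₁ : Matrix (Fin n) (Fin n) ℝ) (hR₀ : R₀ ∈ SO n) (hR₁ : R₁ ∈ SO n)
    (hne : R₀ ≠ R₁)
    (hmax₀ : ∀ R ∈ SO n, F R ≤ F R₀) (hmax₁ : ∀ R ∈ SO n, F R ≤ F R₁)
    (W : Matrix (Fin n) (Fin n) ℝ) (hW : Wᵀ = -W)
    (hlog : R₁ = R₀ * NormedSpace.exp W)
    (heig : ∀ μ : ℂ, IsEigenvalue W μ → μ ≠ 0 →
      ∃ lam : ℝ, lam ∈ Set.Ioc (-Real.pi) Real.pi ∧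
        (μ = Complex.I * lam ∨ μ = -(Complex.I * lam))) :
    ∀ t : ℝ, ∀ R ∈ SO n, F R ≤ F (R₀ * NormedSpace.exp (t • W)) := by
  classical
  intro t R hR
  set g : ℝ → ℝ := fun s => F (R₀ * NormedSpace.exp (s • W)) with hg
  have hSOmem : ∀ s : ℝ, R₀ * NormedSpace.exp (s • W) ∈ SO n := fun s =>
    mul_mem_SO hR₀ (exp_skew_mem_SO _ (smul_skew s W hW))
  have hg_le : ∀ s, g s ≤ F R₀ := fun s => hmax₀ _ (hSOmem s)
  have hg0 : g 0 = F R₀ := by simp [hg, NormedSpace.exp_zero]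
  have hg1 : g 1 = F R₁ := by
    rw [hg]
    simp only [one_smul]
    rw [← hlog]
  have hFR01 : F R₀ = F R₁ := le_antisymm (hmax₁ R₀ hR₀) (hmax₀ R₁ hR₁)
  -- the matrix B representing X ↦ F (R₀ * X) via the trace
  set B : Matrix (Fin n) (Fin n) ℝ :=
    Matrix.of (fun i j => F (R₀ * Matrix.single j i 1)) with hB
  have htr : ∀ X : Matrix (Fin n) (Fin n) ℝ, Matrix.trace (B * X) = F (R₀ * X) := by
    intro X
    have hlhs : Matrix.trace (B * X) = ∑ i, ∑ j, B i j * X j i := by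
      simp [Matrix.trace, Matrix.diag, Matrix.mul_apply]
    have hrhs : F (R₀ * X) = ∑ i, ∑ j, X i j * F (R₀ * Matrix.single i j 1) := by
      conv_lhs => rw [Matrix.matrix_eq_sum_single X]
      rw [Finset.mul_sum, map_sum]
      refine Finset.sum_congr rfl (fun i _ => ?_)
      rw [Finset.mul_sum, map_sum]
      refine Finset.sum_congr rfl (fun j _ => ?_)
      have h1 : Matrix.single i j (X i j) = X i j • Matrix.single i j 1 := by
        rw [Matrix.smul_single, smul_eq_mul, mul_one]
      rw [h1, mul_smul_comm, LinearMap.map_smul, smul_eq_mul]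
    rw [hlhs, hrhs, Finset.sum_comm]
    refine Finset.sum_congr rfl (fun i _ => Finset.sum_congr rfl (fun j _ => ?_))
    rw [hB, Matrix.of_apply, mul_comm]
  set O : Matrix (Fin n) (Fin n) ℝ := NormedSpace.exp W with hO
  have hBsym : Bᵀ = B := symm_of_trace_skew B (fun S hS => by
    rw [htr]
    exact firstOrder F R₀ hR₀ hmax₀ S hS)
  have hOB : (B * O)ᵀ = B * O := symm_of_trace_skew _ (fun S hS => by
    rw [Matrix.mul_assoc, htr, ← Matrix.mul_assoc, ← hlog]
    exact firstOrder F R₁ hR₁ hmax₁ S hS)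
  have hOBO : O * B * O = B := by
    have hOT : Oᵀ = NormedSpace.exp (-W) := by
      rw [hO, ← Matrix.exp_transpose, hW]
    have h1 : B * O = NormedSpace.exp (-W) * B := by
      have h2 := Matrix.transpose_mul B O
      rw [hOB, hOT, hBsym] at h2
      exact h2
    have hOmul : O * NormedSpace.exp (-W) = 1 := by
      rw [hO, ← Matrix.exp_add_of_commute W (-W) (Commute.neg_right (Commute.refl W)),
        add_neg_cancel, NormedSpace.exp_zero]
    calc O * B * O = O * (B * O) := by rw [Matrix.mul_assoc]
      _ = O * (NormedSpace.exp (-W) * B) := by rw [h1]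
      _ = (O * NormedSpace.exp (-W)) * B := by rw [Matrix.mul_assoc]
      _ = B := by rw [hOmul, one_mul]
  -- spectral data
  obtain ⟨U, d, hU1, hU2, hdiag, heigvec⟩ := skew_spectral W hW
  have hdrange : ∀ k, -Real.pi ≤ d k ∧ d k ≤ Real.pi := by
    intro k
    by_cases hdk : d k = 0
    · rw [hdk]
      constructor
      · linarith [Real.pi_pos]
      · linarith [Real.pi_pos]
    · obtain ⟨v, hv0, hvE⟩ := heigvec k
      have hmu : IsEigenvalue W (-Complex.I * d k) := ⟨v, hv0, hvE⟩
      have hmune : (-Complex.I * (d k : ℂ)) ≠ 0 := by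
        simp [Complex.I_ne_zero, hdk]
      obtain ⟨lam, hlam, hcase⟩ := heig _ hmu hmune
      rcases hcase with h | h
      · have h2 : ((d k : ℝ) : ℂ) = ((-lam : ℝ) : ℂ) := by
          push_cast
          linear_combination Complex.I * h + ((d k : ℂ) + (lam : ℂ)) * Complex.I_sq
        have hd : d k = -lam := by exact_mod_cast h2
        constructor <;> [linarith [hlam.2]; linarith [hlam.1]]
      · have h2 : ((d k : ℝ) : ℂ) = ((lam : ℝ) : ℂ) := by
          push_cast
          linear_combination Complex.I * h + ((d k : ℂ) - (lam : ℂ)) * Complex.I_sq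
        have hd : d k = lam := by exact_mod_cast h2
        constructor <;> [linarith [hlam.1]; linarith [hlam.2]]
  set Bc : Matrix (Fin n) (Fin n) ℂ := B.map Complex.ofReal with hBc
  set C : Matrix (Fin n) (Fin n) ℂ := star U * Bc * U with hC
  set E : Matrix (Fin n) (Fin n) ℂ :=
    Matrix.diagonal (fun k => Complex.exp (-Complex.I * d k)) with hE
  have hexps : ∀ s : ℝ, (NormedSpace.exp (s • W)).map Complex.ofReal
      = U * Matrix.diagonal (fun k => Complex.exp (-Complex.I * d k * s)) * star U :=
    fun s => exp_smul_decomp W U d hU1 hdiag s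
  have hOc : O.map Complex.ofReal = U * E * star U := by
    have h1 := hexps 1
    rw [one_smul, ← hO] at h1
    rw [h1, hE]
    congr 2
    funext k
    norm_num
  have hmapOBO : (O.map Complex.ofReal) * Bc * (O.map Complex.ofReal) = Bc := by
    have h1 := congrArg (fun M : Matrix (Fin n) (Fin n) ℝ => M.map Complex.ofReal) hOBO
    rw [map_mul_ofReal, map_mul_ofReal] at h1
    exact h1
  have cancel1 : ∀ X : Matrix (Fin n) (Fin n) ℂ, star U * (U * X) = X := fun X => by
    rw [← Matrix.mul_assoc, hU2, one_mul]
  have hECE : E * C * E = C := by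
    rw [hOc] at hmapOBO
    have expand : E * C * E = star U * ((U * E * star U) * Bc * (U * E * star U)) * U := by
      simp only [hC, Matrix.mul_assoc]
      rw [hU2, mul_one, cancel1]
    rw [expand, hmapOBO, hC]
  have hdiagrel : ∀ k, Complex.exp (-Complex.I * d k) * C k k * Complex.exp (-Complex.I * d k)
      = C k k := by
    intro k
    have h1 := congrArg (fun M : Matrix (Fin n) (Fin n) ℂ => M k k) hECE
    simpa [hE, Matrix.mul_diagonal, Matrix.diagonal_mul] using h1
  have hdval : ∀ k, C k k ≠ 0 → d k = 0 ∨ d k = Real.pi ∨ d k = -Real.pi := by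
    intro k hCk
    have h1 : C k k * (Complex.exp (-Complex.I * d k) * Complex.exp (-Complex.I * d k) - 1)
        = 0 := by
      linear_combination hdiagrel k
    have h2 : Complex.exp (-Complex.I * d k) * Complex.exp (-Complex.I * d k) = 1 := by
      rcases mul_eq_zero.mp h1 with h | h
      · exact absurd h hCk
      · exact sub_eq_zero.mp h
    rw [← Complex.exp_add] at h2
    obtain ⟨m, hm⟩ := Complex.exp_eq_one_iff.mp h2
    have h3 : ((-2 * d k : ℝ) : ℂ) = ((m * (2 * Real.pi) : ℝ) : ℂ) := by
      push_cast
      push_cast at hm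
      linear_combination (-Complex.I) * hm
        + ((-2 : ℂ) * (d k : ℂ) - 2 * (Real.pi : ℂ) * (m : ℂ)) * Complex.I_sq
    have h4 : -2 * d k = m * (2 * Real.pi) := by exact_mod_cast h3
    have h5 : d k = -m * Real.pi := by linarith
    have hmr1 : (m : ℝ) ≤ 1 := by
      nlinarith [(hdrange k).1, Real.pi_pos]
    have hmr2 : (-1 : ℝ) ≤ (m : ℝ) := by
      nlinarith [(hdrange k).2, Real.pi_pos]
    have hm1 : m ≤ 1 := by exact_mod_cast hmr1
    have hm2 : -1 ≤ m := by exact_mod_cast hmr2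
    interval_cases m
    · right; left
      rw [h5]; push_cast; ring
    · left
      rw [h5]; push_cast; ring
    · right; right
      rw [h5]; push_cast; ring
  -- the trace formula
  have hgs : ∀ s : ℝ, ((g s : ℝ) : ℂ) = ∑ k, C k k * Complex.exp (-Complex.I * d k * s) := by
    intro s
    have h1 : g s = Matrix.trace (B * NormedSpace.exp (s • W)) := (htr _).symm
    have h2 : ((Matrix.trace (B * NormedSpace.exp (s • W)) : ℝ) : ℂ)
        = Matrix.trace ((B * NormedSpace.exp (s • W)).map Complex.ofReal) := by
      simp [Matrix.trace, Matrix.diag, Matrix.map_apply]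
    rw [h1, h2, map_mul_ofReal, hexps s]
    have h3 : Bc * (U * Matrix.diagonal (fun k => Complex.exp (-Complex.I * d k * s)) * star U)
        = (Bc * U * Matrix.diagonal (fun k => Complex.exp (-Complex.I * d k * s))) * star U := by
      simp only [Matrix.mul_assoc]
    rw [h3, Matrix.trace_mul_comm]
    have h4 : star U * (Bc * U * Matrix.diagonal (fun k => Complex.exp (-Complex.I * d k * s)))
        = C * Matrix.diagonal (fun k => Complex.exp (-Complex.I * d k * s)) := by
      simp only [hC, Matrix.mul_assoc]
    rw [h4]
    simp [Matrix.trace, Matrix.diag, Matrix.mul_diagonal]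
  -- each diagonal term is a trig polynomial with frequency π
  have hterm : ∀ k, ∃ c a b : ℝ, ∀ s : ℝ,
      (C k k * Complex.exp (-Complex.I * d k * s)).re
        = c + a * Real.cos (Real.pi * s) + b * Real.sin (Real.pi * s) := by
    intro k
    by_cases hCk : C k k = 0
    · exact ⟨0, 0, 0, fun s => by simp [hCk]⟩
    rcases hdval k hCk with h | h | h
    · refine ⟨(C k k).re, 0, 0, fun s => by simp [h]⟩
    · refine ⟨0, (C k k).re, (C k k).im, fun s => ?_⟩
      rw [h]
      have hw : -Complex.I * (Real.pi : ℂ) * (s : ℂ) = ((-(Real.pi * s) : ℝ) : ℂ) * Complex.I := by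
        push_cast; ring
      rw [hw, Complex.exp_mul_I, ← Complex.ofReal_cos, ← Complex.ofReal_sin,
        Real.cos_neg, Real.sin_neg]
      simp only [Complex.mul_re, Complex.mul_im, Complex.add_re, Complex.add_im,
        Complex.sub_re, Complex.sub_im, Complex.ofReal_re, Complex.ofReal_im,
        Complex.I_re, Complex.I_im, Complex.neg_re, Complex.neg_im]
      ring
    · refine ⟨0, (C k k).re, -(C k k).im, fun s => ?_⟩
      rw [h]
      have hw : -Complex.I * ((-Real.pi : ℝ) : ℂ) * (s : ℂ)
          = (((Real.pi * s) : ℝ) : ℂ) * Complex.I := by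
        push_cast; ring
      rw [hw, Complex.exp_mul_I, ← Complex.ofReal_cos, ← Complex.ofReal_sin]
      simp only [Complex.mul_re, Complex.mul_im, Complex.add_re, Complex.add_im,
        Complex.sub_re, Complex.sub_im, Complex.ofReal_re, Complex.ofReal_im,
        Complex.I_re, Complex.I_im, Complex.neg_re, Complex.neg_im]
      ring
  choose cf af bf hf using hterm
  have hform : ∀ s : ℝ, g s = (∑ k, cf k) + (∑ k, af k) * Real.cos (Real.pi * s)
      + (∑ k, bf k) * Real.sin (Real.pi * s) := by
    intro s
    have h1 : g s = (((g s : ℝ) : ℂ)).re := by simp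
    rw [h1, hgs s, Complex.re_sum]
    calc ∑ k, (C k k * Complex.exp (-Complex.I * d k * s)).re
        = ∑ k, (cf k + af k * Real.cos (Real.pi * s) + bf k * Real.sin (Real.pi * s)) := by
          exact Finset.sum_congr rfl (fun k _ => hf k s)
      _ = (∑ k, cf k) + (∑ k, af k) * Real.cos (Real.pi * s)
          + (∑ k, bf k) * Real.sin (Real.pi * s) := by
          rw [Finset.sum_add_distrib, Finset.sum_add_distrib, ← Finset.sum_mul, ← Finset.sum_mul]
  set c := ∑ k, cf k
  set a := ∑ k, af k
  set b := ∑ k, bf k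
  have hc0 : g 0 = c + a := by
    have := hform 0
    simpa using this
  have hc1 : g 1 = c - a := by
    have := hform 1
    rw [mul_one, Real.cos_pi, Real.sin_pi] at this
    linarith
  have hg01 : g 0 = g 1 := by rw [hg0, hg1, hFR01]
  have ha : a = 0 := by
    rw [hc0, hc1] at hg01
    linarith
  have hchalf : g (1/2) = c + b := by
    have := hform (1/2)
    rw [show Real.pi * (1/2) = Real.pi / 2 by ring, Real.cos_pi_div_two, Real.sin_pi_div_two,
      ha] at this
    linarith
  have hcmhalf : g (-(1/2)) = c - b := by
    have := hform (-(1/2))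
    rw [show Real.pi * (-(1/2)) = -(Real.pi / 2) by ring, Real.cos_neg, Real.sin_neg,
      Real.cos_pi_div_two, Real.sin_pi_div_two, ha] at this
    linarith
  have hgc : g 0 = c := by rw [hc0, ha, add_zero]
  have hb : b = 0 := by
    have h1 := hg_le (1/2)
    have h2 := hg_le (-(1/2))
    rw [← hg0, hgc] at h1 h2
    rw [hchalf] at h1
    rw [hcmhalf] at h2
    linarith
  have hgt : g t = F R₀ := by
    rw [hform t, ha, hb, zero_mul, zero_mul, add_zero, add_zero, ← hgc, hg0]
  calc F R ≤ F R₀ := hmax₀ R hR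
    _ = g t := hgt.symm
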